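/- (Hölder bound leading to the very weak solution estimate) Let 1 < p < ∞ and 0 ≤ ε < p − 1. For vector fields ∇u, 𝔣, ∇φ, with ∇φ the gradient part of the Hodge decomposition |∇u|^{-ε}∇u = ∇φ + 𝔥 in L^{(p-ε)/(1-ε)}(ℝ^n, ℝ^n), the test identity ∫⟨|∇u|^{p-2}∇u, ∇φ⟩ = ∫⟨|𝔣|^{p-2}𝔣, ∇φ⟩ implies ∫_{ℝ^n} |∇u|^{p-ε} ≤ C(p,ε) ( ∫_{ℝ^n} |𝔣|^{p-ε} + ∫_{ℝ^n} |𝔥|^{(p-ε)/(1-ε)} ). -/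

import Mathlib

open MeasureTheory Metric ENNReal
noncomputable section

lemma young_weighted {a b X Y t : ℝ} (hab : a.HolderConjugate b) (hX : 0 ≤ X) (hY : 0 ≤ Y)
    (ht : 0 < t) :
    X ^ (1/a) * Y ^ (1/b) ≤ t * X + (b * (a*t) ^ (b/a))⁻¹ * Y := by
  have ha := hab.pos
  have hb := hab.symm.pos
  have hat : 0 < a * t := mul_pos ha ht
  set c : ℝ := (a*t) ^ (1/a) with hc
  have hcpos : 0 < c := Real.rpow_pos_of_pos hat _
  have key := Real.young_inequality_of_nonneg (a := c * X ^ (1/a)) (b := Y ^ (1/b) / c)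
    (mul_nonneg hcpos.le (Real.rpow_nonneg hX _))
    (div_nonneg (Real.rpow_nonneg hY _) hcpos.le) hab
  have e1 : (c * X ^ (1/a)) * (Y ^ (1/b) / c) = X ^ (1/a) * Y ^ (1/b) := by
    field_simp
  have hca : c ^ a = a * t := by
    rw [hc, ← Real.rpow_mul hat.le, one_div, inv_mul_cancel₀ ha.ne', Real.rpow_one]
  have hcb : c ^ b = (a*t) ^ (b/a) := by
    rw [hc, ← Real.rpow_mul hat.le, one_div, inv_mul_eq_div]
  have hXa : (X ^ (1/a)) ^ a = X := by
    rw [← Real.rpow_mul hX, one_div, inv_mul_cancel₀ ha.ne', Real.rpow_one]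
  have hYb : (Y ^ (1/b)) ^ b = Y := by
    rw [← Real.rpow_mul hY, one_div, inv_mul_cancel₀ hb.ne', Real.rpow_one]
  have e2 : (c * X ^ (1/a)) ^ a / a = t * X := by
    rw [Real.mul_rpow hcpos.le (Real.rpow_nonneg hX _), hca, hXa]
    field_simp
  have e3 : (Y ^ (1/b) / c) ^ b / b = (b * (a*t) ^ (b/a))⁻¹ * Y := by
    rw [Real.div_rpow (Real.rpow_nonneg hY _) hcpos.le, hYb, hcb]
    have h2 : (0:ℝ) < (a*t) ^ (b/a) := Real.rpow_pos_of_pos hat _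
    rw [div_div, mul_comm ((a*t)^(b/a)) b, ← one_div, div_eq_mul_one_div Y, mul_comm Y]
  rw [e1, e2, e3] at key
  exact key

lemma integrable_mul_conj {α : Type*} [MeasurableSpace α] {μ : Measure α} {a b : ℝ}
    (hab : a.HolderConjugate b) {u v : α → ℝ}
    (hu : MemLp u (ENNReal.ofReal a) μ) (hv : MemLp v (ENNReal.ofReal b) μ) :
    Integrable (fun x => u x * v x) μ := by
  have hpqr : (1:ℝ≥0∞) / 1 = 1 / ENNReal.ofReal a + 1 / ENNReal.ofReal b := by
    rw [one_div, one_div, one_div, inv_one, ← ENNReal.ofReal_inv_of_pos hab.pos,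
      ← ENNReal.ofReal_inv_of_pos hab.symm.pos,
      ← ENNReal.ofReal_add (inv_nonneg.2 hab.nonneg) (inv_nonneg.2 hab.symm.nonneg),
      hab.inv_add_inv_eq_one, ENNReal.ofReal_one]
  have := hv.smul (φ := u) (𝕜 := ℝ) (r := 1) hu (hpqr := ⟨by simp only [one_div] at hpqr; exact hpqr.symm⟩)
  rw [memLp_one_iff_integrable] at this
  exact this

lemma memℒp_norm_rpow' {α : Type*} [MeasurableSpace α] {μ : Measure α}
    {E : Type*} [NormedAddCommGroup E] {f : α → E} {r s : ℝ} (hs : 0 < s)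
    (hf : MemLp f (ENNReal.ofReal r) μ) :
    MemLp (fun x => ‖f x‖ ^ s) (ENNReal.ofReal (r/s)) μ := by
  have := hf.norm_rpow_div (ENNReal.ofReal s)
  rwa [ENNReal.toReal_ofReal hs.le, ← ENNReal.ofReal_div_of_pos hs] at this

lemma rpow_mul_self {x q : ℝ} (hx : 0 ≤ x) (hq : q + 1 ≠ 0) : x ^ q * x = x ^ (q+1) := by
  rcases eq_or_lt_of_le hx with h|h
  · rw [← h]; simp [Real.zero_rpow hq]
  · rw [Real.rpow_add_one h.ne']

section Ptwise
variable {E : Type*} [NormedAddCommGroup E] [InnerProductSpace ℝ E]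

lemma ptwise_norm_smul {ε : ℝ} (hε : ε < 1) (v : E) :
    ‖(‖v‖ ^ (-ε)) • v‖ = ‖v‖ ^ (1-ε) := by
  rw [norm_smul, Real.norm_eq_abs, abs_of_nonneg (Real.rpow_nonneg (norm_nonneg v) _),
    rpow_mul_self (norm_nonneg v) (by intro hc; linarith),
    show -ε + 1 = 1 - ε by ring]

lemma ptwise_identity {p ε : ℝ} (hp : 1 < p) (hε : ε < p - 1) {v w h' : E}
    (hx : (‖v‖ ^ (-ε)) • v = w + h') :
    ‖v‖ ^ (p-ε) = ‖v‖ ^ (p-2) * (inner ℝ v w : ℝ) + ‖v‖ ^ (p-2) * (inner ℝ v h' : ℝ) := by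
  rw [← mul_add, ← inner_add_right, ← hx, real_inner_smul_right,
    real_inner_self_eq_norm_mul_norm]
  rcases eq_or_ne v 0 with rfl | hv
  · simp [Real.zero_rpow (show p - ε ≠ 0 by intro hc; linarith [hc])]
  · have hs : (0:ℝ) < ‖v‖ := norm_pos_iff.2 hv
    have h2 : ‖v‖ ^ (-ε) * (‖v‖ * ‖v‖) = ‖v‖ ^ (2-ε) := by
      rw [show (2-ε : ℝ) = -ε + 1 + 1 by ring, Real.rpow_add hs, Real.rpow_add hs,
        Real.rpow_one]
      ring
    rw [h2, ← Real.rpow_add hs]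
    ring_nf

lemma ptwise_abs_bound {p : ℝ} (hp : 1 < p) (v w : E) :
    |‖v‖ ^ (p-2) * (inner ℝ v w : ℝ)| ≤ ‖v‖ ^ (p-1) * ‖w‖ := by
  rw [abs_mul, abs_of_nonneg (Real.rpow_nonneg (norm_nonneg v) _)]
  calc ‖v‖ ^ (p-2) * |(inner ℝ v w : ℝ)| ≤ ‖v‖ ^ (p-2) * (‖v‖ * ‖w‖) :=
        mul_le_mul_of_nonneg_left (abs_real_inner_le_norm v w)
          (Real.rpow_nonneg (norm_nonneg v) _)
    _ = (‖v‖ ^ (p-2) * ‖v‖) * ‖w‖ := by ring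
    _ = ‖v‖ ^ (p-1) * ‖w‖ := by
        rw [rpow_mul_self (norm_nonneg v) (by intro hc; linarith),
          show p - 2 + 1 = p - 1 by ring]

end Ptwise


/-- Hölder bound leading to the very weak solution estimate: if
`|∇u|^{-ε}∇u = ∇φ + 𝔥` is the Hodge decomposition in `L^{(p-ε)/(1-ε)}(ℝ^n,ℝ^n)` and
`∫⟨|∇u|^{p-2}∇u, ∇φ⟩ = ∫⟨|𝔣|^{p-2}𝔣, ∇φ⟩`, then
`∫ |∇u|^{p-ε} ≤ C(p,ε) (∫ |𝔣|^{p-ε} + ∫ |𝔥|^{(p-ε)/(1-ε)})`. -/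
theorem very_weak_solution_holder_bound (n : ℕ) (p ε : ℝ)
    (hp : 1 < p) (hε₀ : 0 ≤ ε) (hε₁ : ε < p - 1) (hε₂ : ε < 1) :
    ∃ C : ℝ, 0 < C ∧
      ∀ (Du f Dφ h : EuclideanSpace ℝ (Fin n) → EuclideanSpace ℝ (Fin n)),
        MemLp Du (ENNReal.ofReal (p - ε)) volume →
        MemLp f (ENNReal.ofReal (p - ε)) volume →
        MemLp h (ENNReal.ofReal ((p - ε) / (1 - ε))) volume →
        MemLp Dφ (ENNReal.ofReal ((p - ε) / (1 - ε))) volume →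
        -- the Hodge decomposition `|∇u|^{-ε}∇u = ∇φ + 𝔥`
        (∀ x, ‖Du x‖ ^ (-ε) • Du x = Dφ x + h x) →
        -- the test identity `∫⟨|∇u|^{p-2}∇u, ∇φ⟩ = ∫⟨|𝔣|^{p-2}𝔣, ∇φ⟩`
        (∫ x, ‖Du x‖ ^ (p - 2) * (inner ℝ (Du x) (Dφ x) : ℝ) =
          ∫ x, ‖f x‖ ^ (p - 2) * (inner ℝ (f x) (Dφ x) : ℝ)) →
          ∫ x, ‖Du x‖ ^ (p - ε) ≤
            C * ((∫ x, ‖f x‖ ^ (p - ε)) +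
              ∫ x, ‖h x‖ ^ ((p - ε) / (1 - ε))) := by
  have hp1 : (0:ℝ) < p - 1 := by linarith
  have h1ε : (0:ℝ) < 1 - ε := by linarith
  have hr0 : (0:ℝ) < p - ε := by linarith
  set a : ℝ := (p-ε)/(p-1) with ha_def
  set b : ℝ := (p-ε)/(1-ε) with hb_def
  have ha : 0 < a := div_pos hr0 hp1
  have hb : 0 < b := div_pos hr0 h1ε
  have hab : a.HolderConjugate b := by
    rw [Real.holderConjugate_iff]; constructor
    · rw [ha_def]; rw [lt_div_iff₀ hp1]; linarith
    · rw [ha_def, hb_def, inv_div, inv_div, ← add_div,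
        show p - 1 + (1 - ε) = p - ε by ring, div_self hr0.ne']
  have hC1p : 0 < (b * (a * (4:ℝ)⁻¹) ^ (b/a))⁻¹ :=
    inv_pos.2 (mul_pos hb (Real.rpow_pos_of_pos (mul_pos ha (by norm_num)) _))
  have hC2p : 0 < (a * (b * (4:ℝ)⁻¹) ^ (a/b))⁻¹ :=
    inv_pos.2 (mul_pos ha (Real.rpow_pos_of_pos (mul_pos hb (by norm_num)) _))
  have hC3p : 0 < (b * (a * (1:ℝ)) ^ (b/a))⁻¹ :=
    inv_pos.2 (mul_pos hb (Real.rpow_pos_of_pos (mul_pos ha (by norm_num)) _))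
  refine ⟨2 * ((b * (a * (4:ℝ)⁻¹) ^ (b/a))⁻¹ + (a * (b * (4:ℝ)⁻¹) ^ (a/b))⁻¹ +
    (b * (a * (1:ℝ)) ^ (b/a))⁻¹ + 1), by linarith, ?_⟩
  intro Du f Dφ h hDu hf hh hDφ hHodge hTest
  -- MemLp of powers of norms
  have mDu1 : MemLp (fun x => ‖Du x‖ ^ (p-1)) (ENNReal.ofReal a) volume := by
    rw [ha_def]; exact memℒp_norm_rpow' hp1 hDu
  have mDuε : MemLp (fun x => ‖Du x‖ ^ (1-ε)) (ENNReal.ofReal b) volume := by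
    rw [hb_def]; exact memℒp_norm_rpow' h1ε hDu
  have mf1 : MemLp (fun x => ‖f x‖ ^ (p-1)) (ENNReal.ofReal a) volume := by
    rw [ha_def]; exact memℒp_norm_rpow' hp1 hf
  have mh : MemLp (fun x => ‖h x‖) (ENNReal.ofReal b) volume := hh.norm
  have mφ : MemLp (fun x => ‖Dφ x‖) (ENNReal.ofReal b) volume := hDφ.norm
  -- integrability of powers
  have iA : Integrable (fun x => ‖Du x‖ ^ (p-ε)) volume := by
    have := hDu.integrable_norm_rpow
      (by simp only [ne_eq, ENNReal.ofReal_eq_zero, not_le]; exact hr0) ENNReal.ofReal_ne_top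
    rwa [ENNReal.toReal_ofReal hr0.le] at this
  have iF : Integrable (fun x => ‖f x‖ ^ (p-ε)) volume := by
    have := hf.integrable_norm_rpow
      (by simp only [ne_eq, ENNReal.ofReal_eq_zero, not_le]; exact hr0) ENNReal.ofReal_ne_top
    rwa [ENNReal.toReal_ofReal hr0.le] at this
  have iH : Integrable (fun x => ‖h x‖ ^ b) volume := by
    have := hh.integrable_norm_rpow
      (by simp only [ne_eq, ENNReal.ofReal_eq_zero, not_le]; exact hb) ENNReal.ofReal_ne_top
    rwa [ENNReal.toReal_ofReal hb.le] at this
  -- integrability of products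
  have iT1 : Integrable (fun x => ‖Du x‖ ^ (p-1) * ‖h x‖) volume :=
    integrable_mul_conj hab mDu1 mh
  have iT2 : Integrable (fun x => ‖f x‖ ^ (p-1) * ‖Du x‖ ^ (1-ε)) volume :=
    integrable_mul_conj hab mf1 mDuε
  have iT3 : Integrable (fun x => ‖f x‖ ^ (p-1) * ‖h x‖) volume :=
    integrable_mul_conj hab mf1 mh
  have iTφf : Integrable (fun x => ‖f x‖ ^ (p-1) * ‖Dφ x‖) volume :=
    integrable_mul_conj hab mf1 mφ
  have iTφu : Integrable (fun x => ‖Du x‖ ^ (p-1) * ‖Dφ x‖) volume :=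
    integrable_mul_conj hab mDu1 mφ
  -- measurability of inner-product terms
  have mes : ∀ (g w : EuclideanSpace ℝ (Fin n) → EuclideanSpace ℝ (Fin n)),
      AEStronglyMeasurable g volume → AEStronglyMeasurable w volume →
      AEStronglyMeasurable (fun x => ‖g x‖ ^ (p-2) * (inner ℝ (g x) (w x) : ℝ)) volume :=
    fun g w hg hw =>
      ((hg.norm.aemeasurable.pow aemeasurable_const).aestronglyMeasurable).mul (hg.inner hw)
  -- integrability of inner-product terms
  have iI1 : Integrable (fun x => ‖Du x‖ ^ (p-2) * (inner ℝ (Du x) (Dφ x) : ℝ)) volume :=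
    iTφu.mono' (mes _ _ hDu.1 hDφ.1)
      (ae_of_all _ fun x => by
        rw [Real.norm_eq_abs]; exact ptwise_abs_bound hp (Du x) (Dφ x))
  have iI2 : Integrable (fun x => ‖Du x‖ ^ (p-2) * (inner ℝ (Du x) (h x) : ℝ)) volume :=
    iT1.mono' (mes _ _ hDu.1 hh.1)
      (ae_of_all _ fun x => by
        rw [Real.norm_eq_abs]; exact ptwise_abs_bound hp (Du x) (h x))
  have iI3 : Integrable (fun x => ‖f x‖ ^ (p-2) * (inner ℝ (f x) (Dφ x) : ℝ)) volume :=
    iTφf.mono' (mes _ _ hf.1 hDφ.1)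
      (ae_of_all _ fun x => by
        rw [Real.norm_eq_abs]; exact ptwise_abs_bound hp (f x) (Dφ x))
  -- the identity
  have hId : ∫ x, ‖Du x‖ ^ (p-ε) =
      (∫ x, ‖Du x‖ ^ (p-2) * (inner ℝ (Du x) (Dφ x) : ℝ)) +
        ∫ x, ‖Du x‖ ^ (p-2) * (inner ℝ (Du x) (h x) : ℝ) := by
    rw [← integral_add iI1 iI2]
    exact integral_congr_ae (ae_of_all _ fun x => ptwise_identity hp hε₁ (hHodge x))
  -- elementary integral bounds
  have hb1 : (∫ x, ‖Du x‖ ^ (p-2) * (inner ℝ (Du x) (h x) : ℝ)) ≤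
      ∫ x, ‖Du x‖ ^ (p-1) * ‖h x‖ :=
    integral_mono iI2 iT1 (fun x => (le_abs_self _).trans (ptwise_abs_bound hp _ _))
  have hb2 : (∫ x, ‖f x‖ ^ (p-2) * (inner ℝ (f x) (Dφ x) : ℝ)) ≤
      ∫ x, ‖f x‖ ^ (p-1) * ‖Dφ x‖ :=
    integral_mono iI3 iTφf (fun x => (le_abs_self _).trans (ptwise_abs_bound hp _ _))
  have hb3 : (∫ x, ‖f x‖ ^ (p-1) * ‖Dφ x‖) ≤
      (∫ x, ‖f x‖ ^ (p-1) * ‖Du x‖ ^ (1-ε)) + ∫ x, ‖f x‖ ^ (p-1) * ‖h x‖ := by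
    rw [← integral_add iT2 iT3]
    refine integral_mono iTφf (iT2.add iT3) (fun x => ?_)
    have hφle : ‖Dφ x‖ ≤ ‖Du x‖ ^ (1-ε) + ‖h x‖ := by
      calc ‖Dφ x‖ = ‖(Dφ x + h x) - h x‖ := by rw [add_sub_cancel_right]
        _ ≤ ‖Dφ x + h x‖ + ‖h x‖ := norm_sub_le _ _
        _ = ‖Du x‖ ^ (1-ε) + ‖h x‖ := by rw [← hHodge x, ptwise_norm_smul hε₂]
    calc ‖f x‖ ^ (p-1) * ‖Dφ x‖ ≤ ‖f x‖ ^ (p-1) * (‖Du x‖ ^ (1-ε) + ‖h x‖) :=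
          mul_le_mul_of_nonneg_left hφle (Real.rpow_nonneg (norm_nonneg _) _)
      _ = ‖f x‖ ^ (p-1) * ‖Du x‖ ^ (1-ε) + ‖f x‖ ^ (p-1) * ‖h x‖ := mul_add _ _ _
  -- Hölder bounds
  have hea : (p-1) * a = p - ε := by rw [ha_def, mul_comm, div_mul_cancel₀ _ hp1.ne']
  have heb : (1-ε) * b = p - ε := by rw [hb_def, mul_comm, div_mul_cancel₀ _ h1ε.ne']
  have eDu : (∫ x, (‖Du x‖ ^ (p-1)) ^ a) = ∫ x, ‖Du x‖ ^ (p-ε) := by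
    refine integral_congr_ae (ae_of_all _ fun x => ?_)
    show (‖Du x‖ ^ (p-1)) ^ a = ‖Du x‖ ^ (p-ε)
    rw [← Real.rpow_mul (norm_nonneg _), hea]
  have ef : (∫ x, (‖f x‖ ^ (p-1)) ^ a) = ∫ x, ‖f x‖ ^ (p-ε) := by
    refine integral_congr_ae (ae_of_all _ fun x => ?_)
    show (‖f x‖ ^ (p-1)) ^ a = ‖f x‖ ^ (p-ε)
    rw [← Real.rpow_mul (norm_nonneg _), hea]
  have eDub : (∫ x, (‖Du x‖ ^ (1-ε)) ^ b) = ∫ x, ‖Du x‖ ^ (p-ε) := by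
    refine integral_congr_ae (ae_of_all _ fun x => ?_)
    show (‖Du x‖ ^ (1-ε)) ^ b = ‖Du x‖ ^ (p-ε)
    rw [← Real.rpow_mul (norm_nonneg _), heb]
  have hH1 : (∫ x, ‖Du x‖ ^ (p-1) * ‖h x‖) ≤
      (∫ x, ‖Du x‖ ^ (p-ε)) ^ (1/a) * (∫ x, ‖h x‖ ^ b) ^ (1/b) := by
    have hHo := integral_mul_le_Lp_mul_Lq_of_nonneg hab
      (ae_of_all _ fun x => Real.rpow_nonneg (norm_nonneg _) _)
      (ae_of_all _ fun x => norm_nonneg _) mDu1 mh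
    rwa [eDu] at hHo
  have hH2 : (∫ x, ‖f x‖ ^ (p-1) * ‖Du x‖ ^ (1-ε)) ≤
      (∫ x, ‖f x‖ ^ (p-ε)) ^ (1/a) * (∫ x, ‖Du x‖ ^ (p-ε)) ^ (1/b) := by
    have hHo := integral_mul_le_Lp_mul_Lq_of_nonneg hab
      (ae_of_all _ fun x => Real.rpow_nonneg (norm_nonneg _) _)
      (ae_of_all _ fun x => Real.rpow_nonneg (norm_nonneg _) _) mf1 mDuε
    rwa [ef, eDub] at hHo
  have hH3 : (∫ x, ‖f x‖ ^ (p-1) * ‖h x‖) ≤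
      (∫ x, ‖f x‖ ^ (p-ε)) ^ (1/a) * (∫ x, ‖h x‖ ^ b) ^ (1/b) := by
    have hHo := integral_mul_le_Lp_mul_Lq_of_nonneg hab
      (ae_of_all _ fun x => Real.rpow_nonneg (norm_nonneg _) _)
      (ae_of_all _ fun x => norm_nonneg _) mf1 mh
    rwa [ef] at hHo
  -- nonnegativity
  have hA0 : 0 ≤ ∫ x, ‖Du x‖ ^ (p-ε) :=
    integral_nonneg fun x => Real.rpow_nonneg (norm_nonneg _) _
  have hF0 : 0 ≤ ∫ x, ‖f x‖ ^ (p-ε) :=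
    integral_nonneg fun x => Real.rpow_nonneg (norm_nonneg _) _
  have hH0 : 0 ≤ ∫ x, ‖h x‖ ^ b :=
    integral_nonneg fun x => Real.rpow_nonneg (norm_nonneg _) _
  -- Young
  have hY1 := young_weighted hab hA0 hH0 (t := (4:ℝ)⁻¹) (by norm_num)
  have hY2 := young_weighted hab.symm hA0 hF0 (t := (4:ℝ)⁻¹) (by norm_num)
  rw [mul_comm] at hY2
  have hY3 := young_weighted hab hF0 hH0 (t := (1:ℝ)) one_pos
  linarith [mul_nonneg hC1p.le hF0, mul_nonneg hC3p.le hF0, mul_nonneg hC2p.le hH0,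
    mul_nonneg hC1p.le hH0, mul_nonneg hC2p.le hF0, mul_nonneg hC3p.le hH0]
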